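/- Let N ≥ 1, let U ⊆ ℝ^N be open, let ρ : U → ℝ and P > 0 satisfy 0 ≤ ρ(x) ≤ P for all x ∈ U, and let h : U → ℝ be twice continuously differentiable with Δh(x) ≤ −1 for all x ∈ U. Let G : ℝ → ℝ be continuously differentiable with G′(s) ≥ α₀ > 0 for all s ∈ ℝ. Fix t₀ ∈ ℝ, real numbers σ, c, reals λ ≥ 0, δ > 0, and M with M ≥ 2λδP/α₀. Suppose w : U × ℝ → ℝ satisfies G(w(x,t)) = M·h(x) + σ + c + λ(t−t₀)² for all (x,t) ∈ U × ℝ. Then for every x ∈ U and every t with |t−t₀| ≤ δ, the function t ↦ w(x,t) is differentiable and ρ(x)·∂ₜw(x,t) ≥ Δₓ(G∘w(·,t))(x), where Δₓ(G∘w(·,t)) denotes the Laplacian in x of the map y ↦ G(w(y,t)). -/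

import Mathlib

/-- The stmtLaplacian of `f : ℝ^N → ℝ`: the sum of the second partial derivatives. -/
noncomputable def stmtLaplacian {N : ℕ} (f : EuclideanSpace ℝ (Fin N) → ℝ)
    (x : EuclideanSpace ℝ (Fin N)) : ℝ :=
  ∑ i : Fin N,
    fderiv ℝ (fun y => fderiv ℝ f y (EuclideanSpace.single i 1)) x (EuclideanSpace.single i 1)

lemma Laplacian_congr {N : ℕ} {f g : EuclideanSpace ℝ (Fin N) → ℝ}
    {x : EuclideanSpace ℝ (Fin N)} (hfg : f =ᶠ[nhds x] g) :
    stmtLaplacian f x = stmtLaplacian g x := by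
  unfold stmtLaplacian
  refine Finset.sum_congr rfl fun i _ => ?_
  have h0 : fderiv ℝ f =ᶠ[nhds x] fderiv ℝ g := hfg.fderiv
  have h1 : (fun y => fderiv ℝ f y (EuclideanSpace.single i 1)) =ᶠ[nhds x]
      (fun y => fderiv ℝ g y (EuclideanSpace.single i 1)) :=
    h0.mono fun y hy => by dsimp only; rw [hy]
  rw [h1.fderiv_eq]

lemma Laplacian_const_mul_add_const {N : ℕ} {U : Set (EuclideanSpace ℝ (Fin N))}
    (hU : IsOpen U) {h : EuclideanSpace ℝ (Fin N) → ℝ} (hh : ContDiffOn ℝ 2 h U)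
    {x : EuclideanSpace ℝ (Fin N)} (hx : x ∈ U) (M C : ℝ) :
    stmtLaplacian (fun y => M * h y + C) x = M * stmtLaplacian h x := by
  have hhx : ∀ y ∈ U, DifferentiableAt ℝ h y := fun y hy =>
    (hh.contDiffAt (hU.mem_nhds hy)).differentiableAt (by norm_num)
  have hUx : U ∈ nhds x := hU.mem_nhds hx
  unfold stmtLaplacian
  rw [Finset.mul_sum]
  refine Finset.sum_congr rfl fun i _ => ?_
  set v := EuclideanSpace.single i (1 : ℝ)
  have h1 : (fun y => fderiv ℝ (fun z => M * h z + C) y v) =ᶠ[nhds x]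
      (fun y => M * fderiv ℝ h y v) := by
    filter_upwards [hUx] with y hy
    rw [fderiv_add_const, fderiv_const_mul (hhx y hy)]
    simp
  rw [h1.fderiv_eq]
  have hd : DifferentiableAt ℝ (fun y => fderiv ℝ h y v) x := by
    have h2 : ContDiffAt ℝ 1 (fderiv ℝ h) x := by
      have := (hh.contDiffAt hUx).fderiv_right (m := 1) le_rfl
      exact this
    exact (h2.differentiableAt (by norm_num)).clm_apply (differentiableAt_const v)
  rw [fderiv_const_mul hd M]
  simp

/-- The upper barrier `w = G⁻¹[Mh + σ + c + λ(t-t₀)²]` built from the Miller function `h`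
is a pointwise supersolution of `ρ ∂ₜ u = Δ[G(u)]` when `0 ≤ ρ ≤ P`. -/
theorem stmt_7 (N : ℕ) (hN : 1 ≤ N) (U : Set (EuclideanSpace ℝ (Fin N))) (hU : IsOpen U)
    (ρ : EuclideanSpace ℝ (Fin N) → ℝ) (P : ℝ) (hP : 0 < P)
    (hρ : ∀ x ∈ U, 0 ≤ ρ x ∧ ρ x ≤ P)
    (h : EuclideanSpace ℝ (Fin N) → ℝ) (hh : ContDiffOn ℝ 2 h U)
    (hΔh : ∀ x ∈ U, stmtLaplacian h x ≤ -1)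
    (G : ℝ → ℝ) (hG : ContDiff ℝ 1 G)
    (α₀ : ℝ) (hα₀ : 0 < α₀) (hG' : ∀ s : ℝ, α₀ ≤ deriv G s)
    (t₀ σ c lam δ M : ℝ) (hlam : 0 ≤ lam) (hδ : 0 < δ)
    (hM : 2 * lam * δ * P / α₀ ≤ M)
    (w : EuclideanSpace ℝ (Fin N) → ℝ → ℝ)
    (hw : ∀ x ∈ U, ∀ t : ℝ,
      G (w x t) = M * h x + σ + c + lam * (t - t₀) ^ 2) :
    ∀ x ∈ U, ∀ t : ℝ, |t - t₀| ≤ δ →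
      DifferentiableAt ℝ (w x) t ∧
      stmtLaplacian (fun y => G (w y t)) x ≤ ρ x * deriv (w x) t := by
  intro x hx t ht
  -- G is strictly monotone, hence injective
  have hGmono : StrictMono G := strictMono_of_deriv_pos fun s => lt_of_lt_of_le hα₀ (hG' s)
  have hGinj : Function.Injective G := hGmono.injective
  -- the derivative of w x at t
  set a : ℝ := w x t with ha
  set d : ℝ := deriv G a with hd
  have hdpos : 0 < d := lt_of_lt_of_le hα₀ (hG' a)
  have hGa : HasStrictDerivAt G d a :=
    (hG.contDiffAt).hasStrictDerivAt (by norm_num)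
  set g : ℝ → ℝ := hGa.localInverse G d a hdpos.ne' with hg
  -- F t' : the right-hand side as a function of time
  set F : ℝ → ℝ := fun t' => M * h x + σ + c + lam * (t' - t₀) ^ 2 with hF
  have hFt : F t = G a := (hw x hx t).symm
  have hFd : HasDerivAt F (lam * (2 * (t - t₀))) t := by
    have : HasDerivAt (fun t' : ℝ => (t' - t₀) ^ 2) (2 * (t - t₀)) t := by
      simpa using (((hasDerivAt_id t).sub_const t₀).fun_pow 2)
    simpa [hF] using ((this.const_mul lam).const_add (M * h x + σ + c))
  -- w x is eventually equal to g ∘ F near t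
  have hright : ∀ᶠ y in nhds (G a), G (g y) = y :=
    (hGa.hasStrictFDerivAt_equiv hdpos.ne').eventually_right_inverse
  have hFcont : ContinuousAt F t := hFd.continuousAt
  have hev : w x =ᶠ[nhds t] fun t' => g (F t') := by
    have : ∀ᶠ t' in nhds t, G (g (F t')) = F t' :=
      hFcont.eventually (hFt ▸ hright)
    filter_upwards [this] with t' h1
    exact hGinj (by rw [hw x hx t', h1])
  have hgF : HasDerivAt (fun t' => g (F t')) (d⁻¹ * (lam * (2 * (t - t₀)))) t := by
    have hgd : HasDerivAt g d⁻¹ (F t) := by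
      rw [hFt]; exact (hGa.to_localInverse hdpos.ne').hasDerivAt
    exact hgd.comp t hFd
  have hwd : HasDerivAt (w x) (d⁻¹ * (lam * (2 * (t - t₀)))) t :=
    hgF.congr_of_eventuallyEq hev
  refine ⟨hwd.differentiableAt, ?_⟩
  rw [hwd.deriv]
  -- the stmtLaplacian computation
  have hlap : stmtLaplacian (fun y => G (w y t)) x = M * stmtLaplacian h x := by
    have hev2 : (fun y => G (w y t)) =ᶠ[nhds x]
        (fun y => M * h y + (σ + c + lam * (t - t₀) ^ 2)) := by
      filter_upwards [hU.mem_nhds hx] with y hy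
      rw [hw y hy t]; ring
    rw [Laplacian_congr hev2, Laplacian_const_mul_add_const hU hh hx]
  rw [hlap]
  -- the arithmetic
  have hM0 : 0 ≤ M :=
    le_trans (div_nonneg (by positivity) hα₀.le) hM
  have hMα : 2 * lam * δ * P ≤ M * α₀ := (div_le_iff₀ hα₀).mp hM
  have hle : M * stmtLaplacian h x ≤ -M := by
    have := hΔh x hx
    nlinarith
  refine le_trans hle ?_
  have hρx := hρ x hx
  have habs : -δ ≤ t - t₀ ∧ t - t₀ ≤ δ := abs_le.mp ht
  have hdG : α₀ ≤ d := hG' a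
  have key : -M * d ≤ ρ x * (lam * (2 * (t - t₀))) := by
    nlinarith [mul_nonneg hρx.1 (mul_nonneg hlam (by linarith [habs.1] : (0:ℝ) ≤ t - t₀ + δ)),
      mul_nonneg (by linarith [hρx.2] : (0:ℝ) ≤ P - ρ x) (mul_nonneg hlam hδ.le),
      mul_nonneg hM0 (by linarith : (0:ℝ) ≤ d - α₀)]
  calc -M = (-M * d) / d := by field_simp
    _ ≤ (ρ x * (lam * (2 * (t - t₀)))) / d := by
        exact (div_le_div_iff_of_pos_right hdpos).mpr key
    _ = ρ x * (d⁻¹ * (lam * (2 * (t - t₀)))) := by field_simp
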